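/- Let f : ℂ → ℂ be holomorphic and nonconstant on a connected open set Ω, and let V = f⁻¹(0) ∩ Ω. Then for every θ ∈ ℝ, the closure of F_θ = {z ∈ Ω \ V : f(z)/|f(z)| = e^{iθ}} contains V. (Boundary stability of the Milnor fibration holds for holomorphic functions, via the open mapping theorem.) -/

import Mathlib

open Complex

/-- Boundary stability for holomorphic functions: if `f` is holomorphic and nonconstant on a
connected open set `Ω ⊆ ℂ` with zero set `V`, then for every `θ` the closure of the Milnor
fiber `F_θ = {z ∈ Ω \ V | f(z)/|f(z)| = e^{iθ}}` contains `V`. -/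
theorem holomorphic_boundary_stability (f : ℂ → ℂ) (Ω : Set ℂ)
    (hΩo : IsOpen Ω) (hΩc : IsPreconnected Ω)
    (hf : DifferentiableOn ℂ f Ω)
    (hnc : ¬ ∃ c : ℂ, ∀ z ∈ Ω, f z = c) (θ : ℝ) :
    Ω ∩ f ⁻¹' {0} ⊆
      closure {z | z ∈ Ω ∧ f z ≠ 0 ∧
        f z / ((‖f z‖ : ℝ) : ℂ) = Complex.exp (θ * Complex.I)} := by
  have han : AnalyticOnNhd ℂ f Ω := hf.analyticOnNhd hΩo
  have hopen : ∀ s ⊆ Ω, IsOpen s → IsOpen (f '' s) :=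
    (han.is_constant_or_isOpen hΩc).resolve_left hnc
  rintro z₀ ⟨hz₀Ω, hz₀0⟩
  rw [Set.mem_preimage, Set.mem_singleton_iff] at hz₀0
  rw [mem_closure_iff]
  intro U hUo hz₀U
  set s := U ∩ Ω with hs
  have hso : IsOpen s := hUo.inter hΩo
  have himg : IsOpen (f '' s) := hopen s Set.inter_subset_right hso
  have h0 : (0 : ℂ) ∈ f '' s := ⟨z₀, ⟨hz₀U, hz₀Ω⟩, hz₀0⟩
  obtain ⟨ε, hε, hball⟩ := Metric.isOpen_iff.mp himg 0 h0
  set w : ℂ := (ε / 2 : ℝ) * Complex.exp (θ * Complex.I) with hw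
  have habsw : ‖w‖ = ε / 2 := by
    rw [hw, norm_mul, Complex.norm_exp_ofReal_mul_I, mul_one, Complex.norm_real, Real.norm_eq_abs,
      abs_of_pos (by linarith)]
  have hwmem : w ∈ f '' s := by
    apply hball
    simp only [Metric.mem_ball, Complex.dist_eq, sub_zero, habsw]
    linarith
  obtain ⟨z, ⟨hzU, hzΩ⟩, hfz⟩ := hwmem
  have hwne : w ≠ 0 := by
    intro h
    rw [h, norm_zero] at habsw; linarith
  refine ⟨z, hzU, hzΩ, by rw [hfz]; exact hwne, ?_⟩
  rw [hfz, habsw, hw]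
  rw [mul_comm, mul_div_assoc]
  rw [div_self (by exact_mod_cast (by linarith : (ε/2 : ℝ) ≠ 0)), mul_one]
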